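/- For x ∈ ℝ with 0 < x < 1 and positive integer n, the Euler zeta function ζ_E(s,x) = 2∑_{m=0}^{∞}(-1)^m/(m+x)^s, analytically continued to all s ∈ ℂ, satisfies ζ_E(-n, x) = E_n(x), where E_n(x) is the n-th Euler polynomial. -/

import Mathlib

/-- The Euler polynomials, defined by the recurrence
`E_n(x) = x^n - (1/2) * ∑_{k<n} C(n,k) E_k(x)`,
equivalent to the generating function `2 e^{xt}/(e^t+1) = ∑ E_n(x) t^n/n!`. -/
noncomputable def eulerPoly : ℕ → Polynomial ℚ := fun n =>
  n.strongRecOn fun n ih =>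
    Polynomial.X ^ n - Polynomial.C (1/2 : ℚ) *
      ∑ k : Fin n, Polynomial.C ((n.choose k : ℚ)) * ih k k.2

/-- The Euler numbers `E_n = E_n(0)`, i.e. with EGF `2/(e^t+1)`. -/
noncomputable def eulerNumber (n : ℕ) : ℚ := (eulerPoly n).eval 0

open Finset Polynomial

private lemma eulerPoly_def (n : ℕ) :
    eulerPoly n = Polynomial.X ^ n - Polynomial.C (1/2 : ℚ) *
      ∑ k : Fin n, Polynomial.C ((n.choose k : ℚ)) * eulerPoly k := by
  simp only [eulerPoly, Nat.strongRecOn]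
  rw [WellFounded.fix_eq]

/-- Evaluation of the Bernoulli polynomial over ℝ. -/
private noncomputable def Bv (m : ℕ) (u : ℝ) : ℝ := Polynomial.aeval u (Polynomial.bernoulli m)

private lemma Bv_eq (m : ℕ) (u : ℝ) :
    Bv m u = ∑ i ∈ range (m+1), (_root_.bernoulli i : ℝ) * (m.choose i : ℝ) * u ^ (m - i) := by
  rw [Bv, Polynomial.bernoulli, map_sum]
  refine Finset.sum_congr rfl fun i hi => ?_
  rw [aeval_monomial, eq_ratCast]
  push_cast
  ring

private lemma Bv_add (m : ℕ) (u v : ℝ) :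
    Bv m (u + v) = ∑ j ∈ range (m+1), (m.choose j : ℝ) * Bv j u * v ^ (m - j) := by
  calc Bv m (u + v)
      = ∑ i ∈ range (m+1), ∑ r ∈ range (m - i + 1),
          (_root_.bernoulli i : ℝ) * ((m.choose i : ℝ) * ((m-i).choose r : ℝ)) *
            (u ^ r * v ^ (m - i - r)) := by
        rw [Bv_eq]
        refine Finset.sum_congr rfl fun i hi => ?_
        rw [add_pow, Finset.mul_sum]
        refine Finset.sum_congr rfl fun r hr => ?_
        ring
    _ = ∑ j ∈ range (m+1), ∑ i ∈ range (j+1),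
          (_root_.bernoulli i : ℝ) * ((m.choose j : ℝ) * (j.choose i : ℝ)) *
            (u ^ (j - i) * v ^ (m - j)) := by
        rw [Finset.sum_sigma', Finset.sum_sigma']
        refine Finset.sum_nbij' (fun p => ⟨p.1 + p.2, p.1⟩) (fun q => ⟨q.2, q.1 - q.2⟩)
          ?_ ?_ ?_ ?_ ?_
        · rintro ⟨i, r⟩ hp
          simp only [Finset.mem_sigma, Finset.mem_range] at hp ⊢
          omega
        · rintro ⟨j, i⟩ hq
          simp only [Finset.mem_sigma, Finset.mem_range] at hq ⊢
          omega
        · rintro ⟨i, r⟩ _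
          simp
        · rintro ⟨j, i⟩ hq
          simp only [Finset.mem_sigma, Finset.mem_range] at hq
          have : i + (j - i) = j := by omega
          simp [this]
        · rintro ⟨i, r⟩ hp
          simp only [Finset.mem_sigma, Finset.mem_range] at hp
          have h1 : i + r ≤ m := by omega
          have hc := Nat.choose_mul (n := m) (Nat.le_add_right i r)
          rw [Nat.add_sub_cancel_left] at hc
          have hcR : (m.choose (i+r) : ℝ) * ((i+r).choose i : ℝ)
              = (m.choose i : ℝ) * ((m-i).choose r : ℝ) := by exact_mod_cast hc
          simp only [Nat.add_sub_cancel_left]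
          rw [← Nat.sub_sub]
          linear_combination (_root_.bernoulli i : ℝ) * (u ^ r * v ^ (m - i - r)) * hcR.symm
    _ = ∑ j ∈ range (m+1), (m.choose j : ℝ) * Bv j u * v ^ (m - j) := by
        refine Finset.sum_congr rfl fun j hj => ?_
        rw [Bv_eq, Finset.mul_sum, Finset.sum_mul]
        exact Finset.sum_congr rfl fun i _ => by ring

private lemma Bv_choose_sum (m : ℕ) (u : ℝ) :
    ∑ j ∈ range (m+1), (m.choose j : ℝ) * Bv j u = Bv m u + m * u ^ (m-1) := by
  cases m with
  | zero => simp [Bv]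
  | succ d =>
    rw [Finset.sum_range_succ, Nat.choose_self]
    have h2 := congrArg (Polynomial.aeval (u : ℝ)) (Polynomial.sum_bernoulli d)
    simp only [map_sum, map_smul, aeval_monomial, eq_ratCast] at h2
    push_cast at h2
    have h3 : ∑ j ∈ range (d+1), ((d+1).choose j : ℝ) * Bv j u = ((d:ℝ)+1) * u ^ d := by
      rw [← h2]
      refine Finset.sum_congr rfl fun j hj => ?_
      rw [Rat.smul_def, Bv]
      push_cast
      ring
    rw [h3]
    push_cast
    ring

private lemma Bv_add_one (m : ℕ) (u : ℝ) : Bv m (u + 1) = Bv m u + m * u ^ (m-1) := by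
  rw [Bv_add, ← Bv_choose_sum]
  exact Finset.sum_congr rfl fun j hj => by rw [one_pow, mul_one]

private noncomputable def Ev (n : ℕ) (x : ℝ) : ℝ :=
  2^(n+1) / ((n:ℝ)+1) * (Bv (n+1) ((x+1)/2) - Bv (n+1) (x/2))

private lemma doubling (n : ℕ) (u : ℝ) :
    ∑ j ∈ range (n+2), ((n+1).choose j : ℝ) * 2^j * Bv j u
      = 2^(n+1) * Bv (n+1) (u + 2⁻¹) := by
  rw [Bv_add, Finset.mul_sum]
  refine Finset.sum_congr rfl fun j hj => ?_
  have hj' : j ≤ n+1 := by simpa [Nat.lt_succ_iff] using Finset.mem_range.1 hj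
  have e : j + (n+1-j) = n+1 := by omega
  have h2 : (2:ℝ)^(n+1) = 2^j * 2^(n+1-j) := by rw [← pow_add, e]
  have hnz : (2:ℝ)^(n+1-j) ≠ 0 := by positivity
  rw [inv_pow, h2]
  field_simp

private lemma key_sum (n : ℕ) (x : ℝ) :
    ∑ k ∈ range (n+1), (n.choose k : ℝ) * Ev k x + Ev n x = 2 * x ^ n := by
  have hD0 : Bv 0 ((x+1)/2) - Bv 0 (x/2) = 0 := by simp [Bv]
  have step1 : ∑ k ∈ range (n+1), (n.choose k : ℝ) * Ev k x
      = ((n:ℝ)+1)⁻¹ * ∑ j ∈ range (n+2),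
          ((n+1).choose j : ℝ) * 2^j * (Bv j ((x+1)/2) - Bv j (x/2)) := by
    rw [Finset.sum_range_succ' (fun j => ((n+1).choose j : ℝ) * 2^j * (Bv j ((x+1)/2) - Bv j (x/2))) (n+1),
      hD0, mul_zero, add_zero, Finset.mul_sum]
    refine Finset.sum_congr rfl fun k hk => ?_
    have hc : ((n:ℝ)+1) * (n.choose k : ℝ) = ((n+1).choose (k+1) : ℝ) * ((k:ℝ)+1) := by
      have := Nat.add_one_mul_choose_eq n k
      exact_mod_cast congrArg (Nat.cast : ℕ → ℝ) this
    have hk1 : ((k:ℝ)+1) ≠ 0 := by positivity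
    have hn1 : ((n:ℝ)+1) ≠ 0 := by positivity
    rw [Ev]
    field_simp
    linear_combination (Bv (k+1) ((x+1)/2) - Bv (k+1) (x/2)) * hc
  have split : ∑ j ∈ range (n+2),
      ((n+1).choose j : ℝ) * 2^j * (Bv j ((x+1)/2) - Bv j (x/2))
      = 2^(n+1) * (Bv (n+1) ((x+1)/2 + 2⁻¹) - Bv (n+1) (x/2 + 2⁻¹)) := by
    rw [mul_sub, ← doubling, ← doubling, ← Finset.sum_sub_distrib]
    refine Finset.sum_congr rfl fun j hj => ?_
    ring
  have hb2 : (x+1)/2 + 2⁻¹ = x/2 + 1 := by ring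
  have ha2 : x/2 + 2⁻¹ = (x+1)/2 := by ring
  rw [step1, split, hb2, ha2, Ev]
  have hshift := Bv_add_one (n+1) (x/2)
  simp only [Nat.add_sub_cancel] at hshift
  rw [hshift]
  have hn1 : ((n:ℝ)+1) ≠ 0 := by positivity
  have h2n : (2:ℝ)^(n+1) = 2 * 2^n := by ring
  have hx2 : (x/2)^n = x^n / 2^n := div_pow x 2 n
  have h2nz : (2:ℝ)^n ≠ 0 := by positivity
  field_simp
  have h12 : ((1:ℝ)/2)^n * 2^n = 1 := by rw [← mul_pow]; norm_num
  push_cast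
  linear_combination (x^n * (1 + (n:ℝ)) * 2) * h12

private lemma aeval_eulerPoly (n : ℕ) (x : ℝ) :
    (Polynomial.aeval x (eulerPoly n) : ℝ) = Ev n x := by
  induction n using Nat.strong_induction_on with
  | _ n ih =>
    rw [eulerPoly_def]
    simp only [map_sub, map_mul, map_sum, map_pow, Polynomial.aeval_X, Polynomial.aeval_C]
    have hsum : ∑ k : Fin n, (algebraMap ℚ ℝ) ((n.choose (k:ℕ) : ℚ)) *
        (Polynomial.aeval x) (eulerPoly (k:ℕ))
        = ∑ k ∈ range n, (n.choose k : ℝ) * Ev k x := by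
      rw [Fin.sum_univ_eq_sum_range (fun k => (algebraMap ℚ ℝ) ((n.choose k : ℚ)) *
        (Polynomial.aeval x) (eulerPoly k)) n]
      refine Finset.sum_congr rfl fun k hk => ?_
      rw [ih k (Finset.mem_range.1 hk), eq_ratCast, Rat.cast_natCast]
    rw [hsum, eq_ratCast]
    have hrange : ∑ k ∈ range n, (n.choose k : ℝ) * Ev k x = 2*x^n - 2 * Ev n x := by
      have hks := key_sum n x
      rw [Finset.sum_range_succ, Nat.choose_self] at hks
      push_cast at hks
      linarith
    rw [hrange]
    push_cast
    ring

private lemma ofReal_Bv (m : ℕ) (u : ℝ) :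
    ((Polynomial.bernoulli m).map (algebraMap ℚ ℂ)).eval ((u : ℝ) : ℂ)
      = ((Bv m u : ℝ) : ℂ) := by
  rw [Bv, Polynomial.eval_map, ← Polynomial.aeval_def]
  have h := Polynomial.aeval_algHom_apply
    (AlgHom.restrictScalars ℚ Complex.ofRealAm) u (Polynomial.bernoulli m)
  simpa using h

theorem stmt_8 (x : ℝ) (hx0 : 0 < x) (hx1 : x < 1) (n : ℕ) (hn : 0 < n)
    (zetaE : ℂ → ℂ) (hdiff : Differentiable ℂ zetaE)
    (hval : ∀ s : ℂ, 1 < s.re → zetaE s = 2 * ∑' m : ℕ, (-1 : ℂ) ^ m / ((m : ℂ) + (x : ℂ)) ^ s) :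
    zetaE (-(n : ℂ)) = ((Polynomial.aeval x (eulerPoly n) : ℝ) : ℂ) := by
  have ha : x/2 ∈ Set.Icc (0:ℝ) 1 := ⟨by linarith, by linarith⟩
  have hb : (x+1)/2 ∈ Set.Icc (0:ℝ) 1 := ⟨by linarith, by linarith⟩
  set f : ℂ → ℂ := fun s => 2 * (2:ℂ)^(-s) *
    (HurwitzZeta.hurwitzZeta (↑(x/2)) s - HurwitzZeta.hurwitzZeta (↑((x+1)/2)) s) with hf
  have hagree : ∀ s : ℂ, 1 < s.re → zetaE s = f s := by
    intro s hs
    rw [hval s hs, hf]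
    have h1 := HurwitzZeta.hasSum_hurwitzZeta_of_one_lt_re ha hs
    have h2 := HurwitzZeta.hasSum_hurwitzZeta_of_one_lt_re hb hs
    have keyE : (fun k : ℕ => (2:ℂ)^(-s) * (1 / ((k:ℂ) + ((x/2:ℝ):ℂ))^s)) =
        fun k : ℕ => (-1:ℂ)^(2*k) / (((2*k : ℕ):ℂ) + (x:ℂ))^s := by
      funext k
      have hx' : (0:ℝ) ≤ (k:ℝ) + x/2 := by positivity
      have hsplit : (((2*k : ℕ):ℂ) + (x:ℂ)) = ((2:ℝ):ℂ) * (((k:ℝ) + x/2 : ℝ):ℂ) := by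
        push_cast; ring
      rw [pow_mul, neg_one_sq, one_pow, hsplit,
        Complex.mul_cpow_ofReal_nonneg (by norm_num) hx', Complex.cpow_neg]
      push_cast
      ring
    have keyO : (fun k : ℕ => (-((2:ℂ)^(-s))) * (1 / ((k:ℂ) + (((x+1)/2:ℝ):ℂ))^s)) =
        fun k : ℕ => (-1:ℂ)^(2*k+1) / (((2*k+1 : ℕ):ℂ) + (x:ℂ))^s := by
      funext k
      have hx' : (0:ℝ) ≤ (k:ℝ) + (x+1)/2 := by positivity
      have hsplit : (((2*k+1 : ℕ):ℂ) + (x:ℂ)) = ((2:ℝ):ℂ) * (((k:ℝ) + (x+1)/2 : ℝ):ℂ) := by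
        push_cast; ring
      rw [pow_succ, pow_mul, neg_one_sq, one_pow, one_mul, hsplit,
        Complex.mul_cpow_ofReal_nonneg (by norm_num) hx', Complex.cpow_neg]
      push_cast
      ring
    have heven : HasSum (fun k : ℕ => (-1:ℂ)^(2*k) / (((2*k : ℕ):ℂ) + (x:ℂ))^s)
        ((2:ℂ)^(-s) * HurwitzZeta.hurwitzZeta (↑(x/2)) s) :=
      keyE ▸ (h1.mul_left ((2:ℂ)^(-s)))
    have hodd : HasSum (fun k : ℕ => (-1:ℂ)^(2*k+1) / (((2*k+1 : ℕ):ℂ) + (x:ℂ))^s)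
        ((-((2:ℂ)^(-s))) * HurwitzZeta.hurwitzZeta (↑((x+1)/2)) s) :=
      keyO ▸ (h2.mul_left (-((2:ℂ)^(-s))))
    have hsum : HasSum (fun m : ℕ => (-1:ℂ)^m / ((m:ℂ) + (x:ℂ))^s)
        ((2:ℂ)^(-s) * HurwitzZeta.hurwitzZeta (↑(x/2)) s
          + (-((2:ℂ)^(-s))) * HurwitzZeta.hurwitzZeta (↑((x+1)/2)) s) := by
      refine HasSum.even_add_odd ?_ ?_
      · exact_mod_cast heven
      · exact_mod_cast hodd
    rw [hsum.tsum_eq]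
    ring
  have hU : IsOpen ({(1:ℂ)}ᶜ) := isOpen_compl_singleton
  have hfd : DifferentiableOn ℂ f ({(1:ℂ)}ᶜ) := by
    intro s hs
    have hs1 : s ≠ 1 := hs
    refine DifferentiableAt.differentiableWithinAt ?_
    apply DifferentiableAt.mul
    · exact (differentiableAt_const _).mul
        ((differentiableAt_id.neg).const_cpow (Or.inl two_ne_zero))
    · exact (HurwitzZeta.differentiableAt_hurwitzZeta _ hs1).sub
        (HurwitzZeta.differentiableAt_hurwitzZeta _ hs1)
  have hfan : AnalyticOnNhd ℂ f ({(1:ℂ)}ᶜ) := hfd.analyticOnNhd hU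
  have hzan : AnalyticOnNhd ℂ zetaE ({(1:ℂ)}ᶜ) := fun z _ => hdiff.analyticAt z
  have hpre : IsPreconnected ({(1:ℂ)}ᶜ : Set ℂ) :=
    (isConnected_compl_singleton_of_one_lt_rank
      (Complex.rank_real_complex ▸ Nat.one_lt_ofNat) 1).isPreconnected
  have hmem2 : (2:ℂ) ∈ ({(1:ℂ)}ᶜ : Set ℂ) := by
    simp only [Set.mem_compl_iff, Set.mem_singleton_iff]
    norm_num
  have hev : zetaE =ᶠ[nhds (2:ℂ)] f := by
    have ho : IsOpen {s : ℂ | 1 < s.re} := isOpen_lt continuous_const Complex.continuous_re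
    filter_upwards [ho.mem_nhds (by norm_num : (1:ℝ) < (2:ℂ).re)] with s hs
    exact hagree s hs
  have heq := hzan.eqOn_of_preconnected_of_eventuallyEq hfan hpre hmem2 hev
  have hmemn : (-(n:ℂ)) ∈ ({(1:ℂ)}ᶜ : Set ℂ) := by
    simp only [Set.mem_compl_iff, Set.mem_singleton_iff]
    intro h
    have hre := congrArg Complex.re h
    simp only [Complex.neg_re, Complex.natCast_re, Complex.one_re] at hre
    have : (0:ℝ) ≤ (n:ℝ) := Nat.cast_nonneg n
    linarith
  have hz := heq hmemn
  rw [hz, hf]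
  have hζa := HurwitzZeta.hurwitzZeta_neg_nat hn.ne' ha
  have hζb := HurwitzZeta.hurwitzZeta_neg_nat hn.ne' hb
  simp only
  rw [hζa, hζb, ofReal_Bv, ofReal_Bv, aeval_eulerPoly, neg_neg, Complex.cpow_natCast, Ev]
  have hn1 : ((n:ℂ)+1) ≠ 0 := by
    have h0 := Nat.cast_ne_zero (R := ℂ).mpr (Nat.succ_ne_zero n)
    push_cast at h0
    exact h0
  push_cast
  field_simp
  ring
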